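/- Let f : B ⟶ A and g : C ⟶ A be morphisms of simplicial sets, and let f↓g denote the comma simplicial set, defined as the pullback of the map ⟨cod,dom⟩ : A^{Δ[1]} ⟶ A × A (whose two components are given by evaluation at the two vertices of Δ[1]) along g × f : C × B ⟶ A × A. Then for every simplicial set J there is an isomorphism of simplicial sets (f↓g)^J ≅ (f^J)↓(g^J), where (−)^J denotes the internal hom in simplicial sets and f^J : B^J ⟶ A^J, g^J : C^J ⟶ A^J are the induced maps; moreover this isomorphism commutes with the canonical projections to C^J × B^J. -/

import Mathlib

open CategoryTheory Simplicial MonoidalCategory Limits Opposite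

namespace SSet

noncomputable instance : MonoidalClosed SSet.{0} :=
  (inferInstance : MonoidalClosed (SimplexCategoryᵒᵖ ⥤ Type 0))

noncomputable section

/-- Evaluation of `A^{Δ[1]}` at the vertex `i` of `Δ[1]`. -/
def evVertex (A : SSet.{0}) (i : Fin 2) : (ihom Δ[1]).obj A ⟶ A :=
  (λ_ _).inv ≫
    ((unitHomEquiv Δ[1]).symm (stdSimplex.const 1 i (op ⦋0⦌)) ▷ (ihom Δ[1]).obj A) ≫
      (ihom.ev Δ[1]).app A

/-- The map `⟨cod, dom⟩ : A^{Δ[1]} ⟶ A × A` given by evaluation at the two vertices of `Δ[1]`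
(codomain first, domain second). -/
def codDom (A : SSet.{0}) : (ihom Δ[1]).obj A ⟶ A ⊗ A :=
  CartesianMonoidalCategory.lift (evVertex A 1) (evVertex A 0)

/-- The comma simplicial set `f ↓ g` of a cospan `f : B ⟶ A`, `g : C ⟶ A`, defined as the
pullback of `⟨cod, dom⟩ : A^{Δ[1]} ⟶ A × A` along `g × f : C × B ⟶ A × A`. -/
def commaSSet {A B C : SSet.{0}} (f : B ⟶ A) (g : C ⟶ A) : SSet.{0} :=
  pullback (f := g ⊗ₘ f) (g := codDom A)

/-- The canonical projection `f ↓ g ⟶ C × B`. -/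
def commaProj {A B C : SSet.{0}} (f : B ⟶ A) (g : C ⟶ A) : commaSSet f g ⟶ C ⊗ B :=
  pullback.fst (g ⊗ₘ f) (codDom A)


open MonoidalClosed CartesianMonoidalCategory SemiCartesianMonoidalCategory

/-- The "argument swap" map `X ⊗ (Y ⊗ Z) ⟶ Y ⊗ (X ⊗ Z)`. -/
def swapArg (X Y Z : SSet.{0}) : X ⊗ (Y ⊗ Z) ⟶ Y ⊗ (X ⊗ Z) :=
  lift (snd _ _ ≫ fst _ _) (lift (fst _ _) (snd _ _ ≫ snd _ _))

lemma swapArg_swapArg (X Y Z : SSet.{0}) : swapArg X Y Z ≫ swapArg Y X Z = 𝟙 _ := by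
  apply CartesianMonoidalCategory.hom_ext
  · simp [swapArg]
  · apply CartesianMonoidalCategory.hom_ext <;> simp [swapArg]

lemma swapArg_natural (X Y : SSet.{0}) {Z Z' : SSet.{0}} (h : Z ⟶ Z') :
    (X ◁ (Y ◁ h)) ≫ swapArg X Y Z' = swapArg X Y Z ≫ (Y ◁ (X ◁ h)) := by
  apply CartesianMonoidalCategory.hom_ext
  · simp [swapArg]
  · apply CartesianMonoidalCategory.hom_ext <;> simp [swapArg]

/-- The canonical "swap the two exponents" morphism `(A^D)^J ⟶ (A^J)^D`. -/
def swapHom (J D A : SSet.{0}) :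
    (ihom J).obj ((ihom D).obj A) ⟶ (ihom D).obj ((ihom J).obj A) :=
  curry (curry (swapArg J D _ ≫ (D ◁ (ihom.ev J).app ((ihom D).obj A)) ≫ (ihom.ev D).app A))

lemma uncurry_swapHom (J D A : SSet.{0}) :
    (D ◁ swapHom J D A) ≫ (ihom.ev D).app ((ihom J).obj A) =
      curry (swapArg J D _ ≫ (D ◁ (ihom.ev J).app ((ihom D).obj A)) ≫ (ihom.ev D).app A) := by
  rw [← uncurry_eq, swapHom, uncurry_curry]


lemma whiskerLeft_curry_ev {D Y X : SSet.{0}} (h : D ⊗ Y ⟶ X) :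
    (D ◁ curry h) ≫ (ihom.ev D).app X = h := by
  rw [← uncurry_eq, uncurry_curry]

lemma swapHom_swapHom (J D A : SSet.{0}) : swapHom J D A ≫ swapHom D J A = 𝟙 _ := by
  apply uncurry_injective
  rw [uncurry_eq, uncurry_id_eq_ev, MonoidalCategory.whiskerLeft_comp, Category.assoc,
    uncurry_swapHom D J A]
  apply uncurry_injective
  rw [uncurry_eq, uncurry_eq, MonoidalCategory.whiskerLeft_comp]
  simp only [Category.assoc]
  dsimp only [Functor.id_obj]
  rw [whiskerLeft_curry_ev]
  rw [← Category.assoc, swapArg_natural, Category.assoc,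
    ← MonoidalCategory.whiskerLeft_comp_assoc, uncurry_swapHom J D A]
  dsimp only [Functor.id_obj]
  rw [whiskerLeft_curry_ev, ← Category.assoc, swapArg_swapArg, Category.id_comp]

lemma swapHom_comp_eVert (J D A : SSet.{0}) (v : 𝟙_ SSet.{0} ⟶ D) :
    swapHom J D A ≫ ((λ_ _).inv ≫ (v ▷ (ihom D).obj ((ihom J).obj A)) ≫
        (ihom.ev D).app ((ihom J).obj A)) =
      (ihom J).map ((λ_ _).inv ≫ (v ▷ (ihom D).obj A) ≫ (ihom.ev D).app A) := by
  apply uncurry_injective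
  rw [← Category.id_comp ((ihom J).map _), uncurry_natural_right, uncurry_id_eq_ev]
  have h1 : swapHom J D A ≫ ((λ_ _).inv ≫ (v ▷ (ihom D).obj ((ihom J).obj A)) ≫
      (ihom.ev D).app ((ihom J).obj A)) =
      ((λ_ _).inv ≫ (v ▷ _)) ≫
        curry (swapArg J D _ ≫ (D ◁ (ihom.ev J).app ((ihom D).obj A)) ≫
          (ihom.ev D).app A) := by
    slice_lhs 1 2 => rw [MonoidalCategory.leftUnitor_inv_naturality]
    slice_lhs 2 3 => rw [whisker_exchange]
    slice_lhs 3 4 => rw [uncurry_swapHom]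
    simp only [Category.assoc]
  rw [h1, uncurry_natural_left, uncurry_curry]
  have h2 : (J ◁ ((λ_ _).inv ≫ (v ▷ ((ihom J).obj ((ihom D).obj A))))) ≫ swapArg J D _ ≫
      (D ◁ (ihom.ev J).app ((ihom D).obj A)) =
      (ihom.ev J).app ((ihom D).obj A) ≫ (λ_ _).inv ≫ (v ▷ (ihom D).obj A) := by
    apply CartesianMonoidalCategory.hom_ext
    · simp only [swapArg, Category.assoc, lift_fst, whiskerLeft_fst, whiskerLeft_snd,
        whiskerRight_fst, leftUnitor_inv_fst, leftUnitor_inv_fst_assoc,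
        MonoidalCategory.whiskerLeft_comp]
      simp only [whiskerLeft_snd_assoc, whiskerRight_fst, leftUnitor_inv_fst_assoc,
        Functor.id_obj]
      rw [← Category.assoc, ← Category.assoc]
      exact congrArg (· ≫ v) (toUnit_unique _ _)
    · simp [swapArg, comp_lift, comp_lift_assoc, lift_fst_snd]
  simpa only [Category.assoc, Functor.id_obj] using congrArg (· ≫ (ihom.ev D).app A) h2

lemma swapHom_evVertex (J A : SSet.{0}) (i : Fin 2) :
    swapHom J Δ[1] A ≫ evVertex ((ihom J).obj A) i = (ihom J).map (evVertex A i) :=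
  swapHom_comp_eVert J Δ[1] A ((unitHomEquiv Δ[1]).symm (stdSimplex.const 1 i (op ⦋0⦌)))

lemma swapHom_codDom (J A : SSet.{0}) :
    (ihom J).map (codDom A) ≫ CartesianMonoidalCategory.prodComparison (ihom J) A A =
      swapHom J Δ[1] A ≫ codDom ((ihom J).obj A) := by
  apply CartesianMonoidalCategory.hom_ext
  · rw [Category.assoc, Category.assoc, CartesianMonoidalCategory.prodComparison_fst,
      ← Functor.map_comp]
    simp only [codDom, lift_fst]
    exact (swapHom_evVertex J A 1).symm
  · rw [Category.assoc, Category.assoc, CartesianMonoidalCategory.prodComparison_snd,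
      ← Functor.map_comp]
    simp only [codDom, lift_snd]
    exact (swapHom_evVertex J A 0).symm

/-- Cotensoring with a simplicial set `J` commutes with the comma construction: there is an
isomorphism `(f↓g)^J ≅ (f^J)↓(g^J)` commuting with the canonical projections to `C^J` and
`B^J`. -/
theorem ihom_commaSSet_iso {A B C : SSet.{0}} (f : B ⟶ A) (g : C ⟶ A) (J : SSet.{0}) :
    ∃ e : (ihom J).obj (commaSSet f g) ≅ commaSSet ((ihom J).map f) ((ihom J).map g),
      e.hom ≫ (commaProj ((ihom J).map f) ((ihom J).map g) ≫
          CartesianMonoidalCategory.fst ((ihom J).obj C) ((ihom J).obj B)) =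
        (ihom J).map (commaProj f g ≫ CartesianMonoidalCategory.fst C B) ∧
      e.hom ≫ (commaProj ((ihom J).map f) ((ihom J).map g) ≫
          CartesianMonoidalCategory.snd ((ihom J).obj C) ((ihom J).obj B)) =
        (ihom J).map (commaProj f g ≫ CartesianMonoidalCategory.snd C B) := by
  letI : PreservesLimitsOfSize.{0, 0} (ihom J) :=
    (ihom.adjunction J).rightAdjoint_preservesLimits
  haveI hCB : IsIso (CartesianMonoidalCategory.prodComparison (ihom J) C B) := by
    rw [← CartesianMonoidalCategory.prodComparisonIso_hom]; infer_instance
  haveI hAA : IsIso (CartesianMonoidalCategory.prodComparison (ihom J) A A) := by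
    rw [← CartesianMonoidalCategory.prodComparisonIso_hom]; infer_instance
  haveI hsw : IsIso (swapHom J Δ[1] A) :=
    ⟨swapHom Δ[1] J A, swapHom_swapHom J Δ[1] A, swapHom_swapHom Δ[1] J A⟩
  have w₁ : (ihom J).map (g ⊗ₘ f) ≫ CartesianMonoidalCategory.prodComparison (ihom J) A A =
      CartesianMonoidalCategory.prodComparison (ihom J) C B ≫ ((ihom J).map g ⊗ₘ (ihom J).map f) :=
    CartesianMonoidalCategory.prodComparison_natural (ihom J) g f
  have w₂ := swapHom_codDom J A
  refine ⟨PreservesPullback.iso (ihom J) (g ⊗ₘ f) (codDom A) ≪≫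
    @asIso _ _ _ _ (pullback.map ((ihom J).map (g ⊗ₘ f)) ((ihom J).map (codDom A))
      ((ihom J).map g ⊗ₘ (ihom J).map f) (codDom ((ihom J).obj A))
      (CartesianMonoidalCategory.prodComparison (ihom J) C B) (swapHom J Δ[1] A)
      (CartesianMonoidalCategory.prodComparison (ihom J) A A) w₁ w₂)
      (pullback.map_isIso _ _ _ _ _ _ _ w₁ w₂), ?_, ?_⟩
  · delta commaSSet
    simp only [commaProj, Iso.trans_hom, asIso_hom, Category.assoc, pullback.lift_fst,
      pullback.lift_fst_assoc, CartesianMonoidalCategory.prodComparison_fst,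
      PreservesPullback.iso_hom_fst_assoc, Functor.map_comp]
  · delta commaSSet
    simp only [commaProj, Iso.trans_hom, asIso_hom, Category.assoc, pullback.lift_fst,
      pullback.lift_fst_assoc, CartesianMonoidalCategory.prodComparison_snd,
      PreservesPullback.iso_hom_fst_assoc, Functor.map_comp]

end

end SSet
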